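/- arXiv:2001.10847 — 3 statements merged into one kernel-verified Lean document; each statement's English description precedes it below -/
import Mathlib

section
/- Let f ∈ BMO(ℝ) and suppose f(x) = 0 for all x ∈ J \ I, where I ⊆ J are intervals with |J| = (1+δ)|I| for some δ > 0. Then for 1 ≤ τ < ∞, ∫_I |f(x)|^τ dx ≤ (1 + δ^{-1})^τ ∫_J |f(x) − avg_J f|^τ dx, where avg_J f = |J|^{-1} ∫_J f. -/
open MeasureTheory Set

lemma aux_split (τ θ u v : ℝ) (hτ : 1 ≤ τ) (hθ0 : 0 < θ) (hθ1 : θ < 1)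
    (hu : 0 ≤ u) (hv : 0 ≤ v) :
    (u + v) ^ τ ≤ θ ^ (1 - τ) * u ^ τ + (1 - θ) ^ (1 - τ) * v ^ τ := by
  have h1θ : 0 < 1 - θ := by linarith
  have hc := (convexOn_rpow hτ).2 (x := u / θ) (y := v / (1 - θ))
    (by simp only [mem_Ici]; positivity) (by simp only [mem_Ici]; positivity)
    hθ0.le h1θ.le (by ring)
  have hx : θ • (u / θ) + (1 - θ) • (v / (1 - θ)) = u + v := by
    simp only [smul_eq_mul]
    field_simp
  rw [hx] at hc
  calc (u + v) ^ τ ≤ θ • (u / θ) ^ τ + (1 - θ) • (v / (1 - θ)) ^ τ := hc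
    _ = θ ^ (1 - τ) * u ^ τ + (1 - θ) ^ (1 - τ) * v ^ τ := by
        rw [Real.div_rpow hu hθ0.le, Real.div_rpow hv h1θ.le,
          Real.rpow_sub hθ0, Real.rpow_sub h1θ]
        simp only [smul_eq_mul, Real.rpow_one]
        ring

/-- If `f ∈ BMO(ℝ)` vanishes on `J \ I`, where `I = [c,d] ⊆ J = [a,b]` and
`|J| = (1+δ)|I|`, then for `1 ≤ τ < ∞`,
`∫_I |f|^τ ≤ (1+δ⁻¹)^τ ∫_J |f − avg_J f|^τ`. -/
theorem stmt3 (τ δ : ℝ) (hτ : 1 ≤ τ) (hδ : 0 < δ)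
    (f : ℝ → ℝ) (a b c d : ℝ) (hab : a < b) (hcd : c < d)
    (hsub : Icc c d ⊆ Icc a b)
    (hlen : b - a = (1 + δ) * (d - c))
    (hf : LocallyIntegrable f volume)
    (hbmo : ∃ M : ℝ, ∀ u v : ℝ, u < v →
      (∫ x in Icc u v, |f x - (v - u)⁻¹ * ∫ y in Icc u v, f y|) ≤ M * (v - u))
    (hvanish : ∀ x ∈ Icc a b \ Icc c d, f x = 0)
    (hLτ : IntegrableOn (fun x => |f x| ^ τ) (Icc a b) volume) :
    (∫ x in Icc c d, |f x| ^ τ) ≤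
      (1 + δ⁻¹) ^ τ *
        ∫ x in Icc a b, |f x - (b - a)⁻¹ * ∫ y in Icc a b, f y| ^ τ := by
  have hdc : (0:ℝ) < d - c := sub_pos.mpr hcd
  have hba : (0:ℝ) < b - a := sub_pos.mpr hab
  have hk : (0:ℝ) < 1 + δ := by linarith
  have hτ0 : (0:ℝ) < τ := by linarith
  set A : ℝ := (b - a)⁻¹ * ∫ y in Icc a b, f y with hA
  set θ : ℝ := δ / (1 + δ) with hθ
  have hθ0 : 0 < θ := div_pos hδ hk
  have hθ1 : θ < 1 := (div_lt_one hk).mpr (by linarith)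
  set P : ℝ := ∫ x in Icc c d, |f x| ^ τ with hP
  set Q : ℝ := ∫ x in Icc a b, |f x - A| ^ τ with hQ
  set S : ℝ := ∫ x in Icc c d, |f x| with hS
  -- measurability / integrability facts
  have hfiJ : IntegrableOn f (Icc a b) volume := hf.integrableOn_isCompact isCompact_Icc
  have hfm : AEStronglyMeasurable f (volume.restrict (Icc a b)) := hfiJ.aestronglyMeasurable
  have hq0 : ENNReal.ofReal τ ≠ 0 := by
    simp only [ne_eq, ENNReal.ofReal_eq_zero, not_le]; linarith
  have hqt := ENNReal.ofReal_ne_top (r := τ)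
  have hmemJ : MemLp f (ENNReal.ofReal τ) (volume.restrict (Icc a b)) := by
    refine (memLp_norm_rpow_iff (q := ENNReal.ofReal τ) hfm hq0 hqt).mp ?_
    rw [ENNReal.div_self hq0 hqt, memLp_one_iff_integrable]
    simpa [IntegrableOn, Real.norm_eq_abs, ENNReal.toReal_ofReal hτ0.le] using hLτ
  have hmemI : MemLp f (ENNReal.ofReal τ) (volume.restrict (Icc c d)) :=
    hmemJ.mono_measure (Measure.restrict_mono hsub le_rfl)
  have hLτI : IntegrableOn (fun x => |f x| ^ τ) (Icc c d) volume := hLτ.mono_set hsub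
  have hgJ : IntegrableOn (fun x => |f x - A| ^ τ) (Icc a b) volume := by
    have := (hmemJ.sub (memLp_const A)).integrable_norm_rpow hq0 hqt
    simpa [IntegrableOn, Real.norm_eq_abs, ENNReal.toReal_ofReal hτ0.le] using this
  have hP0 : 0 ≤ P := setIntegral_nonneg measurableSet_Icc
    (fun x _ => Real.rpow_nonneg (abs_nonneg _) τ)
  have hS0 : 0 ≤ S := setIntegral_nonneg measurableSet_Icc fun x _ => abs_nonneg _
  -- Step 0 : the integral over J equals the one over I
  have hJI : (∫ y in Icc a b, f y) = ∫ y in Icc c d, f y :=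
    setIntegral_eq_of_subset_of_forall_diff_eq_zero measurableSet_Icc hsub hvanish
  -- Step 1 (Hölder/Jensen): S ^ τ ≤ (d - c) ^ (τ - 1) * P
  have key : S ^ τ ≤ (d - c) ^ (τ - 1) * P := by
    rcases eq_or_lt_of_le hτ with h1 | h1
    · rw [hP, hS, ← h1]
      simp [Real.rpow_one]
    · set q : ℝ := τ / (τ - 1) with hq
      have hpq : τ.HolderConjugate q := Real.HolderConjugate.conjExponent h1
      haveI : IsFiniteMeasure (volume.restrict (Icc c d)) :=
        ⟨by rw [Measure.restrict_apply_univ, Real.volume_Icc]; exact ENNReal.ofReal_lt_top⟩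
      have hH := integral_mul_le_Lp_mul_Lq_of_nonneg (μ := volume.restrict (Icc c d)) hpq
        (f := fun x => ‖f x‖) (g := fun _ => (1:ℝ))
        (Filter.Eventually.of_forall fun x => norm_nonneg _)
        (Filter.Eventually.of_forall fun _ => zero_le_one)
        hmemI.norm
        (memLp_const 1)
      simp only [mul_one, Real.one_rpow, Real.norm_eq_abs] at hH
      rw [integral_const, measureReal_restrict_apply_univ, Real.volume_real_Icc_of_le hcd.le,
        smul_eq_mul, mul_one] at hH
      have hrhs0 : 0 ≤ (∫ x in Icc c d, |f x| ^ τ) ^ (1 / τ) :=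
        Real.rpow_nonneg hP0 _
      calc S ^ τ ≤ ((∫ x in Icc c d, |f x| ^ τ) ^ (1 / τ) * (d - c) ^ (1 / q)) ^ τ :=
            Real.rpow_le_rpow hS0 hH hτ0.le
        _ = (d - c) ^ (τ - 1) * P := by
            rw [Real.mul_rpow hrhs0 (Real.rpow_nonneg hdc.le _),
              ← Real.rpow_mul hP0, ← Real.rpow_mul hdc.le,
              one_div_mul_cancel hτ0.ne', Real.rpow_one]
            have hqτ : 1 / q * τ = τ - 1 := by
              rw [hq]; field_simp
            rw [hqτ, hP]; ring
  -- Step 2 : |A| ≤ (b-a)⁻¹ * S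
  have hAle : |A| ≤ (b - a)⁻¹ * S := by
    rw [hA, hJI, abs_mul, abs_of_pos (inv_pos.mpr hba)]
    gcongr
    calc |∫ y in Icc c d, f y| ≤ ∫ y in Icc c d, |f y| := by
          simpa [Real.norm_eq_abs] using
            norm_integral_le_integral_norm (μ := volume.restrict (Icc c d)) f
      _ = S := rfl
  -- Step 3 : pointwise bound and integration
  have hmono : P ≤ θ ^ (1 - τ) * (∫ x in Icc c d, |f x - A| ^ τ)
      + (1 - θ) ^ (1 - τ) * |A| ^ τ * (d - c) := by
    have hineq : ∀ x ∈ Icc c d,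
        |f x| ^ τ ≤ θ ^ (1 - τ) * |f x - A| ^ τ + (1 - θ) ^ (1 - τ) * |A| ^ τ := by
      intro x _
      have h1 : |f x| ≤ |f x - A| + |A| := by
        calc |f x| = |(f x - A) + A| := by congr 1; ring
          _ ≤ |f x - A| + |A| := abs_add_le _ _
      calc |f x| ^ τ ≤ (|f x - A| + |A|) ^ τ :=
            Real.rpow_le_rpow (abs_nonneg _) h1 hτ0.le
        _ ≤ _ := aux_split τ θ _ _ hτ hθ0 hθ1 (abs_nonneg _) (abs_nonneg _)
    have hconst : IntegrableOn (fun _ : ℝ => (1 - θ) ^ (1 - τ) * |A| ^ τ) (Icc c d) volume :=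
      integrableOn_const (by rw [Real.volume_Icc]; exact ENNReal.ofReal_ne_top)
    have hint1 : IntegrableOn
        (fun x => θ ^ (1 - τ) * |f x - A| ^ τ + (1 - θ) ^ (1 - τ) * |A| ^ τ)
        (Icc c d) volume := ((hgJ.mono_set hsub).const_mul _).add hconst
    have hle := setIntegral_mono_on hLτI hint1 measurableSet_Icc hineq
    rw [integral_add ((hgJ.mono_set hsub).const_mul _) hconst,
      integral_const_mul, integral_const, measureReal_restrict_apply_univ,
      Real.volume_real_Icc_of_le hcd.le, smul_eq_mul] at hle
    exact hle.trans_eq (by ring)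
  -- integral over I ≤ integral over J
  have hIJ : (∫ x in Icc c d, |f x - A| ^ τ) ≤ Q :=
    setIntegral_mono_set hgJ
      (Filter.Eventually.of_forall fun x => Real.rpow_nonneg (abs_nonneg _) τ)
      (HasSubset.Subset.eventuallyLE hsub)
  -- Step 4 : |A|^τ * (d - c) ≤ (1+δ)^(-τ) * P
  have hA2 : |A| ^ τ * (d - c) ≤ (1 + δ) ^ (-τ) * P := by
    have h1 : |A| ^ τ ≤ ((b - a)⁻¹ * S) ^ τ :=
      Real.rpow_le_rpow (abs_nonneg _) hAle hτ0.le
    have h2 : ((b - a)⁻¹ * S) ^ τ = (b - a)⁻¹ ^ τ * S ^ τ :=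
      Real.mul_rpow (inv_nonneg.mpr hba.le) hS0
    have hb0 : 0 ≤ (b - a)⁻¹ ^ τ := Real.rpow_nonneg (inv_nonneg.mpr hba.le) _
    calc |A| ^ τ * (d - c) ≤ (b - a)⁻¹ ^ τ * S ^ τ * (d - c) := by
          rw [← h2]; exact mul_le_mul_of_nonneg_right h1 hdc.le
      _ ≤ (b - a)⁻¹ ^ τ * ((d - c) ^ (τ - 1) * P) * (d - c) :=
          mul_le_mul_of_nonneg_right (mul_le_mul_of_nonneg_left key hb0) hdc.le
      _ = (b - a)⁻¹ ^ τ * (d - c) ^ τ * P := by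
          have hdd : (d - c) ^ (τ - 1) * (d - c) = (d - c) ^ τ := by
            nth_rewrite 2 [← Real.rpow_one (d - c)]
            rw [← Real.rpow_add hdc]; norm_num
          rw [← hdd]; ring
      _ = (1 + δ) ^ (-τ) * P := by
          have h3 : (b - a)⁻¹ ^ τ * (d - c) ^ τ = ((b - a)⁻¹ * (d - c)) ^ τ :=
            (Real.mul_rpow (inv_nonneg.mpr hba.le) hdc.le).symm
          have hbd : (b - a)⁻¹ * (d - c) = (1 + δ)⁻¹ := by
            rw [hlen]; field_simp
          rw [h3, hbd, Real.inv_rpow hk.le, ← Real.rpow_neg hk.le]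
  -- combine
  have hc1 : (1 - θ) ^ (1 - τ) * ((1 + δ) ^ (-τ)) = (1 + δ)⁻¹ := by
    have h1θ : 1 - θ = (1 + δ)⁻¹ := by rw [hθ]; field_simp; ring
    have he : -(1 - τ) + -τ = (-1 : ℝ) := by ring
    rw [h1θ, Real.inv_rpow hk.le, ← Real.rpow_neg hk.le, ← Real.rpow_add hk, he,
      Real.rpow_neg_one]
  have hθτ : 0 ≤ θ ^ (1 - τ) := Real.rpow_nonneg hθ0.le _
  have h1θτ : 0 ≤ (1 - θ) ^ (1 - τ) := Real.rpow_nonneg (by linarith) _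
  have hfinal : P ≤ θ ^ (1 - τ) * Q + (1 + δ)⁻¹ * P := by
    calc P ≤ θ ^ (1 - τ) * (∫ x in Icc c d, |f x - A| ^ τ)
          + (1 - θ) ^ (1 - τ) * |A| ^ τ * (d - c) := hmono
      _ ≤ θ ^ (1 - τ) * Q + (1 - θ) ^ (1 - τ) * ((1 + δ) ^ (-τ) * P) := by
          refine add_le_add (mul_le_mul_of_nonneg_left hIJ hθτ) ?_
          rw [mul_assoc]
          exact mul_le_mul_of_nonneg_left hA2 h1θτ
      _ = θ ^ (1 - τ) * Q + (1 + δ)⁻¹ * P := by rw [← hc1]; ring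
  have h6 : θ * P ≤ θ ^ (1 - τ) * Q := by
    have hθeq : θ = 1 - (1 + δ)⁻¹ := by rw [hθ]; field_simp; ring
    have heq : θ * P = P - (1 + δ)⁻¹ * P := by rw [hθeq]; ring
    linarith
  have h7 : P ≤ θ ^ (-τ) * Q := by
    have h6' := mul_le_mul_of_nonneg_left h6 (inv_nonneg.mpr hθ0.le)
    calc P = θ⁻¹ * (θ * P) := by field_simp
      _ ≤ θ⁻¹ * (θ ^ (1 - τ) * Q) := h6'
      _ = θ ^ (-τ) * Q := by
          rw [← Real.rpow_neg_one θ, ← mul_assoc, ← Real.rpow_add hθ0,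
            show (-1 : ℝ) + (1 - τ) = -τ by ring]
  have h8 : θ ^ (-τ) = (1 + δ⁻¹) ^ τ := by
    rw [Real.rpow_neg hθ0.le, ← Real.inv_rpow hθ0.le]
    congr 1
    rw [hθ, inv_div]
    field_simp
    ring
  rw [h8] at h7
  exact h7
end

section
/- Let 1 ≤ q < p ≤ ∞, J a compact interval, f ∈ L^p(J), and k ≥ 1. Suppose P ∈ Π_k satisfies ‖f − P‖_{L^q(J)} ≤ A · E_k(f,J)_q for some A ≥ 1 (P is a near-best L^q approximation). Then P is a near-best L^p approximation: ‖f − P‖_{L^p(J)} ≤ c(A,k,p,q) · E_k(f,J)_p. -/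
open MeasureTheory Set
open scoped ENNReal NNReal


lemma polyMem (R : Polynomial ℝ) (r : ℝ≥0∞) (a b : ℝ) :
    MemLp (fun x => R.eval x) r (volume.restrict (Icc a b)) := by
  obtain ⟨C, hC⟩ := (isCompact_Icc (a := a) (b := b)).exists_bound_of_continuousOn
    (R.continuous_aeval.continuousOn)
  refine ⟨(Polynomial.continuous R).aestronglyMeasurable, ?_⟩
  refine lt_of_le_of_lt (eLpNorm_le_of_ae_bound (C := C) ?_) ?_
  · filter_upwards [ae_restrict_mem measurableSet_Icc] with x hx
    exact hC x hx
  · refine ENNReal.mul_lt_top ?_ ENNReal.ofReal_lt_top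
    refine ENNReal.rpow_lt_top_of_nonneg (by positivity) ?_
    simp [Measure.restrict_apply_univ, Real.volume_Icc]

set_option maxHeartbeats 1000000 in
set_option synthInstance.maxHeartbeats 400000 in
lemma unitNik (k : ℕ) (q : ℝ≥0∞) (hq : 1 ≤ q) :
    ∃ C : ℝ, 0 ≤ C ∧ ∀ R : Polynomial ℝ, R.degree < (k : ℕ) → ∀ t ∈ Icc (0:ℝ) 1,
      |R.eval t| ≤ C * (eLpNorm (fun x => R.eval x) q (volume.restrict (Icc 0 1))).toReal := by
  haveI : Fact (1 ≤ q) := ⟨hq⟩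
  set μ₀ := volume.restrict (Icc (0:ℝ) 1) with hμ₀
  let pol : (Fin k → ℝ) →ₗ[ℝ] Polynomial ℝ :=
    (Polynomial.degreeLT ℝ k).subtype ∘ₗ (Polynomial.degreeLTEquiv ℝ k).symm.toLinearMap
  have hpol_inj : Function.Injective pol :=
    (Polynomial.degreeLT ℝ k).injective_subtype.comp
      (Polynomial.degreeLTEquiv ℝ k).symm.injective
  let T : (Fin k → ℝ) →ₗ[ℝ] Lp ℝ q μ₀ :=
    { toFun := fun c => (polyMem (pol c) q 0 1).toLp _
      map_add' := fun c d => by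
        refine (MemLp.toLp_congr _ ((polyMem (pol c) q 0 1).add (polyMem (pol d) q 0 1))
          ?_).trans (MemLp.toLp_add _ _)
        filter_upwards with x
        simp [pol, map_add]
      map_smul' := fun m c => by
        show MemLp.toLp (fun x => Polynomial.eval x (pol (m • c))) (polyMem (pol (m • c)) q 0 1)
          = m • MemLp.toLp (fun x => Polynomial.eval x (pol c)) (polyMem (pol c) q 0 1)
        refine (MemLp.toLp_congr _ ((polyMem (pol c) q 0 1).const_smul m)
          ?_).trans (MemLp.toLp_const_smul m _)
        filter_upwards with x
        simp [pol, _root_.map_smul] }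
  have hT : Function.Injective T := by
    refine (injective_iff_map_eq_zero T).mpr fun c h0 => ?_
    have hae : (fun x => (pol c).eval x) =ᵐ[μ₀] 0 :=
      (MemLp.toLp_eq_toLp_iff (polyMem (pol c) q 0 1) MemLp.zero).mp
        (h0.trans (MemLp.toLp_zero _).symm)
    by_contra hne
    have hpne : pol c ≠ 0 := fun h => hne (hpol_inj (h.trans (map_zero pol).symm))
    have hfin : {x : ℝ | (pol c).IsRoot x}.Finite := Polynomial.finite_setOf_isRoot hpne
    have h1 : μ₀ {x : ℝ | ¬ (pol c).eval x = 0} = 0 := by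
      rw [Filter.EventuallyEq, ae_iff] at hae
      simpa using hae
    have h2 : μ₀ {x : ℝ | (pol c).eval x = 0} = 0 :=
      le_antisymm (le_trans (Measure.restrict_le_self _) (hfin.measure_zero volume).le)
        zero_le
    have hu : μ₀ univ = 0 := by
      have hsub : (univ : Set ℝ) ⊆
          {x : ℝ | (pol c).eval x = 0} ∪ {x : ℝ | ¬ (pol c).eval x = 0} := by
        intro x _
        by_cases h : (pol c).eval x = 0
        · exact Or.inl h
        · exact Or.inr h
      refine le_antisymm (le_trans (measure_mono hsub) ?_) zero_le
      refine le_trans (measure_union_le _ _) ?_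
      rw [h1, h2]; simp
    rw [hμ₀, Measure.restrict_apply_univ, Real.volume_Icc] at hu
    simp at hu
  -- the map into continuous functions
  let Φ : (Fin k → ℝ) →ₗ[ℝ] C(Icc (0:ℝ) 1, ℝ) :=
    (Polynomial.toContinuousMapOnAlgHom (Icc (0:ℝ) 1)).toLinearMap ∘ₗ pol
  let e := LinearEquiv.ofInjective T hT
  let L : LinearMap.range T →ₗ[ℝ] C(Icc (0:ℝ) 1, ℝ) := Φ ∘ₗ e.symm.toLinearMap
  haveI : FiniteDimensional ℝ (LinearMap.range T) := LinearMap.finiteDimensional_range T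
  let Lc : LinearMap.range T →L[ℝ] C(Icc (0:ℝ) 1, ℝ) :=
    ⟨L, L.continuous_of_finiteDimensional⟩
  refine ⟨‖Lc‖, Lc.opNorm_nonneg, fun R hR t ht => ?_⟩
  have hmem : R ∈ Polynomial.degreeLT ℝ k := Polynomial.mem_degreeLT.mpr hR
  set c : Fin k → ℝ := Polynomial.degreeLTEquiv ℝ k ⟨R, hmem⟩ with hc
  have hpolc : pol c = R := by
    simp [pol, hc]
  have hLc : Lc ⟨T c, LinearMap.mem_range_self T c⟩ = Φ c := by
    show L ⟨T c, _⟩ = Φ c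
    have : e.symm ⟨T c, LinearMap.mem_range_self T c⟩ = c := by
      have : e c = ⟨T c, LinearMap.mem_range_self T c⟩ := rfl
      rw [← this, LinearEquiv.symm_apply_apply]
    simp only [L, LinearMap.comp_apply, LinearEquiv.coe_toLinearMap, this]
  have hbound : ‖Φ c‖ ≤ ‖Lc‖ * ‖T c‖ := by
    calc ‖Φ c‖ = ‖Lc ⟨T c, LinearMap.mem_range_self T c⟩‖ := by rw [hLc]
    _ ≤ ‖Lc‖ * ‖(⟨T c, LinearMap.mem_range_self T c⟩ : LinearMap.range T)‖ :=
        Lc.le_opNorm _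
    _ = ‖Lc‖ * ‖T c‖ := rfl
  have hTnorm : ‖T c‖ = (eLpNorm (fun x => R.eval x) q μ₀).toReal := by
    show ‖(polyMem (pol c) q 0 1).toLp _‖ = _
    rw [Lp.norm_toLp]
    congr 1
    rw [hpolc]
  have hpt : |R.eval t| ≤ ‖Φ c‖ := by
    have := (Φ c).norm_coe_le_norm ⟨t, ht⟩
    have happ : (Φ c) ⟨t, ht⟩ = R.eval t := by
      simp [Φ, hpolc]
    rw [happ] at this
    simpa [Real.norm_eq_abs] using this
  calc |R.eval t| ≤ ‖Φ c‖ := hpt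
  _ ≤ ‖Lc‖ * ‖T c‖ := hbound
  _ = ‖Lc‖ * (eLpNorm (fun x => R.eval x) q μ₀).toReal := by rw [hTnorm]

lemma nik (k : ℕ) (q : ℝ≥0∞) (hq : 1 ≤ q) (hqt : q ≠ ⊤) :
    ∃ C : ℝ≥0∞, C ≠ ⊤ ∧ ∀ (a b : ℝ) (R : Polynomial ℝ), a < b → R.degree < (k : ℕ) →
      eLpNorm (fun x => R.eval x) ⊤ (volume.restrict (Icc a b)) ≤
        C * (ENNReal.ofReal (b - a)) ^ (-(1 / q.toReal)) *
          eLpNorm (fun x => R.eval x) q (volume.restrict (Icc a b)) := by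
  obtain ⟨C, hC0, hC⟩ := unitNik k q hq
  refine ⟨ENNReal.ofReal C, ENNReal.ofReal_ne_top, fun a b R hab hR => ?_⟩
  have hd : (0:ℝ) < b - a := by linarith
  set d : ℝ≥0∞ := ENNReal.ofReal (b - a) with hdd
  have hd0 : d ≠ 0 := by simp only [hdd, ne_eq, ENNReal.ofReal_eq_zero, not_le]; linarith
  have hdt : d ≠ ⊤ := ENNReal.ofReal_ne_top
  set lin : Polynomial ℝ := Polynomial.C (b - a) * Polynomial.X + Polynomial.C a with hlin
  set S : Polynomial ℝ := R.comp lin with hS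
  -- degree of S
  have hSdeg : S.degree < (k : ℕ) := by
    rcases eq_or_ne S 0 with h | h
    · rw [h, Polynomial.degree_zero]
      exact WithBot.bot_lt_coe k
    · have hRne : R ≠ 0 := by
        intro h0; apply h; rw [hS, h0, Polynomial.zero_comp]
      have : S.natDegree = R.natDegree := by
        rw [hS, Polynomial.natDegree_comp, hlin, Polynomial.natDegree_linear hd.ne', mul_one]
      rw [Polynomial.degree_eq_natDegree h, this]
      exact_mod_cast (Polynomial.degree_eq_natDegree hRne) ▸ hR
  -- the affine map
  set φ : ℝ → ℝ := fun x => a + (b - a) * x with hφ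
  have hφcont : Continuous φ := by continuity
  have hφmeas : Measurable φ := hφcont.measurable
  have hφemb : MeasurableEmbedding φ := by
    have : φ = (fun y => a + y) ∘ (fun x => (b - a) * x) := rfl
    rw [this]
    exact ((Homeomorph.addLeft a).measurableEmbedding).comp
      ((Homeomorph.mulLeft₀ _ hd.ne').measurableEmbedding)
  have hpre : φ ⁻¹' (Icc a b) = Icc (0:ℝ) 1 := by
    ext x
    simp only [mem_preimage, mem_Icc, hφ]
    constructor
    · rintro ⟨h1, h2⟩
      constructor <;> nlinarith
    · rintro ⟨h1, h2⟩
      constructor <;> nlinarith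
  have hmapvol : Measure.map φ (volume : Measure ℝ) = d⁻¹ • volume := by
    have h1 : φ = (fun y => a + y) ∘ (fun x => (b - a) * x) := rfl
    rw [h1, ← Measure.map_map (measurable_const_add a) (measurable_const_mul _),
      Real.map_volume_mul_left hd.ne', Measure.map_smul, map_add_left_eq_self volume a]
    congr 1
    rw [abs_of_pos (inv_pos.mpr hd), ENNReal.ofReal_inv_of_pos hd, hdd]
  have hmap : Measure.map φ (volume.restrict (Icc (0:ℝ) 1)) =
      d⁻¹ • (volume.restrict (Icc a b)) := by
    rw [← hpre, ← Measure.restrict_map hφmeas measurableSet_Icc, hmapvol,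
      Measure.restrict_smul]
  -- eLpNorm of S on [0,1]
  have hcomp : (fun x => R.eval x) ∘ φ = fun x => S.eval x := by
    funext x
    simp only [hS, hφ, hlin, Function.comp_apply, Polynomial.eval_comp, Polynomial.eval_add,
      Polynomial.eval_mul, Polynomial.eval_C, Polynomial.eval_X]
    congr 1
    ring
  have hSnorm : eLpNorm (fun x => S.eval x) q (volume.restrict (Icc (0:ℝ) 1)) =
      d⁻¹ ^ (1 / q.toReal) * eLpNorm (fun x => R.eval x) q (volume.restrict (Icc a b)) := by
    rw [← hcomp, ← hφemb.eLpNorm_map_measure, hmap, eLpNorm_smul_measure_of_ne_top hqt]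
    congr 1
    simp [ENNReal.toReal_inv]
  -- pointwise bound on [a,b]
  set X : ℝ≥0∞ := d⁻¹ ^ (1 / q.toReal) *
    eLpNorm (fun x => R.eval x) q (volume.restrict (Icc a b)) with hX
  have hXt : X ≠ ⊤ := by
    apply ENNReal.mul_ne_top
    · exact (ENNReal.rpow_lt_top_of_nonneg (by positivity)
        (by simp [ENNReal.inv_ne_top, hd0])).ne
    · exact (polyMem R q a b).2.ne
  have hbd : ∀ t ∈ Icc a b, |R.eval t| ≤ C * X.toReal := by
    intro t ht
    have hs : (t - a) / (b - a) ∈ Icc (0:ℝ) 1 := by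
      rw [mem_Icc] at ht ⊢
      constructor
      · apply div_nonneg <;> linarith
      · rw [div_le_one hd]; linarith
    have hev : S.eval ((t - a) / (b - a)) = R.eval t := by
      simp only [hS, Polynomial.eval_comp, hlin]
      simp only [Polynomial.eval_add, Polynomial.eval_mul, Polynomial.eval_C, Polynomial.eval_X]
      congr 1
      field_simp
      ring
    have := hC S hSdeg _ hs
    rw [hev, hSnorm] at this
    exact this
  -- conclude
  have : eLpNorm (fun x => R.eval x) ⊤ (volume.restrict (Icc a b)) ≤
      ENNReal.ofReal (C * X.toReal) := by
    rw [eLpNorm_exponent_top]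
    apply eLpNormEssSup_le_of_ae_bound
    filter_upwards [ae_restrict_mem measurableSet_Icc] with x hx
    simpa [Real.norm_eq_abs] using hbd x hx
  refine this.trans ?_
  rw [ENNReal.ofReal_mul hC0, ENNReal.ofReal_toReal hXt, hX, ← mul_assoc]
  gcongr
  rw [ENNReal.rpow_neg]
  exact (ENNReal.inv_rpow _ _).le

/-- The error `E_k(f,J)_p` of best `L^p(J)` approximation by polynomials of degree ≤ k-1. -/
noncomputable def EK (k : ℕ) (f : ℝ → ℝ) (a b : ℝ) (p : ℝ≥0∞) : ℝ≥0∞ :=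
  ⨅ P : {P : Polynomial ℝ // P.degree < (k : ℕ)},
    eLpNorm (fun x => f x - (P : Polynomial ℝ).eval x) p (volume.restrict (Icc a b))

/-- a near-best `L^q` polynomial approximation is a near-best `L^p`
approximation for `1 ≤ q < p ≤ ∞`. -/
theorem stmt8 (k : ℕ) (hk : 1 ≤ k) (p q : ℝ≥0∞) (hq : 1 ≤ q) (hqp : q < p)
    (A : ℝ≥0∞) (hA : 1 ≤ A) (hAfin : A ≠ ⊤) :
    ∃ c : ℝ≥0∞, c ≠ ⊤ ∧ ∀ (f : ℝ → ℝ) (a b : ℝ) (P : Polynomial ℝ),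
      a < b → P.degree < (k : ℕ) →
      MemLp f p (volume.restrict (Icc a b)) →
      eLpNorm (fun x => f x - P.eval x) q (volume.restrict (Icc a b)) ≤ A * EK k f a b q →
      eLpNorm (fun x => f x - P.eval x) p (volume.restrict (Icc a b)) ≤ c * EK k f a b p := by
  have hqt : q ≠ ⊤ := (hqp.trans_le le_top).ne
  have hp1 : 1 ≤ p := hq.trans hqp.le
  obtain ⟨C, hCt, hC⟩ := nik k q hq hqt
  set c : ℝ≥0∞ := 1 + C * (1 + A) with hc
  have hct : c ≠ ⊤ := by
    simp only [hc]
    exact ENNReal.add_ne_top.mpr ⟨ENNReal.one_ne_top,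
      ENNReal.mul_ne_top hCt (ENNReal.add_ne_top.mpr ⟨ENNReal.one_ne_top, hAfin⟩)⟩
  have hc0 : c ≠ 0 := by simp [hc]
  refine ⟨c, hct, fun f a b P hab hP hf hnear => ?_⟩
  set μ := volume.restrict (Icc a b) with hμ
  set d : ℝ≥0∞ := ENNReal.ofReal (b - a) with hdd
  have hd0 : d ≠ 0 := by
    simp only [hdd, ne_eq, ENNReal.ofReal_eq_zero, not_le]; linarith
  have hdt : d ≠ ⊤ := ENNReal.ofReal_ne_top
  have huniv : μ univ = d := by
    rw [hμ, Measure.restrict_apply_univ, Real.volume_Icc, hdd]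
  set Ep := EK k f a b p with hEp
  set Eq' := EK k f a b q with hEq'
  have hEp_le : ∀ Q : {P : Polynomial ℝ // P.degree < (k : ℕ)},
      Ep ≤ eLpNorm (fun x => f x - Q.1.eval x) p μ := fun Q => iInf_le _ Q
  have hEp_fin : Ep ≠ ⊤ := by
    refine ne_top_of_le_ne_top ?_ (hEp_le ⟨0, by
      rw [Polynomial.degree_zero]; exact bot_lt_iff_ne_bot.mpr (by simp)⟩)
    simpa using hf.2.ne
  set e : ℝ := 1 / q.toReal - 1 / p.toReal with he
  -- Hölder on the finite measure μ
  have holder : ∀ g : ℝ → ℝ, AEStronglyMeasurable g μ →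
      eLpNorm g q μ ≤ eLpNorm g p μ * d ^ e := by
    intro g hg
    have := eLpNorm_le_eLpNorm_mul_rpow_measure_univ hqp.le hg (μ := μ)
    rwa [huniv] at this
  apply ENNReal.le_of_forall_pos_le_add
  intro ε hε _
  set δ : ℝ≥0∞ := (ε : ℝ≥0∞) / c with hδ
  have hδ0 : δ ≠ 0 := by
    simp only [hδ, ne_eq, ENNReal.div_eq_zero_iff, not_or]
    exact ⟨by exact_mod_cast hε.ne', hct⟩
  obtain ⟨Q, hQ⟩ : ∃ Q : {P : Polynomial ℝ // P.degree < (k : ℕ)},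
      eLpNorm (fun x => f x - Q.1.eval x) p μ < Ep + δ := by
    have h := ENNReal.lt_add_right hEp_fin hδ0
    rw [hEp, EK] at h
    exact iInf_lt_iff.mp h
  have hfm : AEStronglyMeasurable f μ := hf.1
  have hQm : AEStronglyMeasurable (fun x => f x - Q.1.eval x) μ :=
    hfm.sub (Polynomial.continuous Q.1).aestronglyMeasurable
  have hPm : AEStronglyMeasurable (fun x => f x - P.eval x) μ :=
    hfm.sub (Polynomial.continuous P).aestronglyMeasurable
  -- L^q bounds
  have hfQq : eLpNorm (fun x => f x - Q.1.eval x) q μ ≤ (Ep + δ) * d ^ e :=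
    (holder _ hQm).trans (by gcongr)
  have hEq_le : Eq' ≤ (Ep + δ) * d ^ e := (iInf_le _ Q).trans hfQq
  have hfPq : eLpNorm (fun x => f x - P.eval x) q μ ≤ A * ((Ep + δ) * d ^ e) :=
    hnear.trans (by gcongr)
  -- the polynomial Q - P
  set R : Polynomial ℝ := Q.1 - P with hR
  have hRdeg : R.degree < (k : ℕ) :=
    lt_of_le_of_lt (Polynomial.degree_sub_le _ _) (max_lt Q.2 hP)
  have hReval : (fun x => R.eval x) =
      (fun x => f x - P.eval x) - (fun x => f x - Q.1.eval x) := by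
    funext x
    simp only [hR, Polynomial.eval_sub, Pi.sub_apply]
    ring
  have hRm : AEStronglyMeasurable (fun x => R.eval x) μ :=
    (Polynomial.continuous R).aestronglyMeasurable
  have hRq : eLpNorm (fun x => R.eval x) q μ ≤ (1 + A) * ((Ep + δ) * d ^ e) := by
    rw [hReval]
    refine (eLpNorm_sub_le hPm hQm hq).trans ?_
    have hsplit : (1 + A) * ((Ep + δ) * d ^ e)
        = A * ((Ep + δ) * d ^ e) + (Ep + δ) * d ^ e := by ring
    rw [hsplit]
    exact add_le_add hfPq hfQq
  -- Nikolskii + Hölder to get the L^p bound on R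
  have hRp : eLpNorm (fun x => R.eval x) p μ ≤ C * (1 + A) * (Ep + δ) := by
    calc eLpNorm (fun x => R.eval x) p μ
        ≤ eLpNorm (fun x => R.eval x) ⊤ μ * d ^ (1 / p.toReal - 1 / (⊤ : ℝ≥0∞).toReal) := by
          have h := eLpNorm_le_eLpNorm_mul_rpow_measure_univ (le_top : p ≤ ⊤) hRm (μ := μ)
          rwa [huniv] at h
      _ = eLpNorm (fun x => R.eval x) ⊤ μ * d ^ (1 / p.toReal) := by norm_num
      _ ≤ (C * d ^ (-(1 / q.toReal)) * eLpNorm (fun x => R.eval x) q μ) * d ^ (1 / p.toReal) := by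
          gcongr
          exact hC a b R hab hRdeg
      _ ≤ (C * d ^ (-(1 / q.toReal)) * ((1 + A) * ((Ep + δ) * d ^ e))) * d ^ (1 / p.toReal) := by
          gcongr
      _ = (C * (1 + A) * (Ep + δ)) * (d ^ (-(1 / q.toReal)) * d ^ e * d ^ (1 / p.toReal)) := by
          ring
      _ = C * (1 + A) * (Ep + δ) := by
          rw [← ENNReal.rpow_add _ _ hd0 hdt, ← ENNReal.rpow_add _ _ hd0 hdt, he,
            show -(1 / q.toReal) + (1 / q.toReal - 1 / p.toReal) + 1 / p.toReal = 0 by ring,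
            ENNReal.rpow_zero, mul_one]
  -- assemble
  have hfP : eLpNorm (fun x => f x - P.eval x) p μ ≤ (Ep + δ) + C * (1 + A) * (Ep + δ) := by
    have hsplit2 : (fun x => f x - P.eval x)
        = (fun x => f x - Q.1.eval x) + fun x => R.eval x := by
      funext x
      simp only [hR, Polynomial.eval_sub, Pi.add_apply]
      ring
    rw [hsplit2]
    exact (eLpNorm_add_le hQm hRm hp1).trans (add_le_add hQ.le hRp)
  refine hfP.trans ?_
  have hfin2 : (Ep + δ) + C * (1 + A) * (Ep + δ) = c * Ep + c * δ := by rw [hc]; ring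
  rw [hfin2]
  gcongr
  exact ENNReal.mul_div_le
end

section
/- Let f be a continuous piecewise polynomial on ℝ of degree ≤ k−1 with respect to a partition containing an unbounded interval J on which f vanishes, and let g = f restricted to a neighboring compact interval J' where f equals a polynomial P of degree ≤ k−1. Then ‖P'‖_{L^∞(J')} ≤ (c/|J'|) ‖f‖_BMO, where c depends only on k. -/
open MeasureTheory Set Polynomial
open scoped NNReal

noncomputable def pcP (n : ℕ) (c : Fin n → ℝ) : Polynomial ℝ :=
  ∑ i : Fin n, Polynomial.C (c i) * Polynomial.X ^ (i : ℕ)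

lemma pcP_eval (n : ℕ) (c : Fin n → ℝ) (x : ℝ) :
    (pcP n c).eval x = ∑ i : Fin n, c i * x ^ (i : ℕ) := by
  simp [pcP, Polynomial.eval_finset_sum]

lemma pcP_coeff (n : ℕ) (c : Fin n → ℝ) (i : Fin n) :
    (pcP n c).coeff (i : ℕ) = c i := by
  simp [pcP, Polynomial.finset_sum_coeff, Polynomial.coeff_X_pow]
  rw [Finset.sum_eq_single i] <;> simp +contextual [Fin.val_eq_val, eq_comm]

noncomputable def fInt (n : ℕ) (c : Fin n → ℝ) : ℝ := ∫ x in (0:ℝ)..1, |(pcP n c).eval x|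

lemma fInt_lip (n : ℕ) (c d : Fin n → ℝ) :
    fInt n c - fInt n d ≤ (n : ℝ) * dist c d := by
  have hic : IntervalIntegrable (fun x => |(pcP n c).eval x|) volume 0 1 :=
    (Polynomial.continuous _).abs.intervalIntegrable _ _
  have hid : IntervalIntegrable (fun x => |(pcP n d).eval x|) volume 0 1 :=
    (Polynomial.continuous _).abs.intervalIntegrable _ _
  have h1 : fInt n c - fInt n d
      = ∫ x in (0:ℝ)..1, (|(pcP n c).eval x| - |(pcP n d).eval x|) := by
    rw [intervalIntegral.integral_sub hic hid]; rfl
  rw [h1]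
  have h2 : ∀ x ∈ Icc (0:ℝ) 1,
      |(pcP n c).eval x| - |(pcP n d).eval x| ≤ (n : ℝ) * dist c d := by
    intro x hx
    have h3 : |(pcP n c).eval x| - |(pcP n d).eval x|
        ≤ |(pcP n c).eval x - (pcP n d).eval x| := abs_sub_abs_le_abs_sub _ _
    refine h3.trans ?_
    rw [pcP_eval, pcP_eval, ← Finset.sum_sub_distrib]
    refine (Finset.abs_sum_le_sum_abs _ _).trans ?_
    have h4 : ∀ i : Fin n, |c i * x ^ (i:ℕ) - d i * x ^ (i:ℕ)| ≤ dist c d := by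
      intro i
      rw [← sub_mul, abs_mul]
      have hxi : |x ^ (i:ℕ)| ≤ 1 := by
        rw [abs_pow]
        exact pow_le_one₀ (abs_nonneg x) (abs_le.mpr ⟨by linarith [hx.1], hx.2⟩)
      have : |c i - d i| ≤ dist c d := by
        rw [dist_eq_norm, ← Real.norm_eq_abs]
        exact norm_le_pi_norm (c - d) i
      calc |c i - d i| * |x ^ (i:ℕ)| ≤ |c i - d i| * 1 :=
            mul_le_mul_of_nonneg_left hxi (abs_nonneg _)
        _ ≤ dist c d := by rwa [mul_one]
    calc ∑ i : Fin n, |c i * x ^ (i:ℕ) - d i * x ^ (i:ℕ)|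
        ≤ ∑ _i : Fin n, dist c d := Finset.sum_le_sum fun i _ => h4 i
      _ = (n : ℝ) * dist c d := by simp [mul_comm]
  calc (∫ x in (0:ℝ)..1, (|(pcP n c).eval x| - |(pcP n d).eval x|))
      ≤ ∫ _x in (0:ℝ)..1, (n : ℝ) * dist c d := by
        refine intervalIntegral.integral_mono_on (by norm_num) (hic.sub hid)
          (intervalIntegrable_const) h2
    _ = (n : ℝ) * dist c d := by simp

lemma fInt_cont (n : ℕ) : Continuous (fInt n) := by
  have : LipschitzWith (n : ℝ≥0) (fInt n) := by
    refine LipschitzWith.of_dist_le_mul fun c d => ?_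
    rw [Real.dist_eq, abs_sub_le_iff]
    constructor
    · simpa using fInt_lip n c d
    · simpa [dist_comm c d] using fInt_lip n d c
  exact this.continuous

lemma fInt_pos (n : ℕ) (c : Fin n → ℝ) (hc : c ≠ 0) : 0 < fInt n c := by
  have hp : pcP n c ≠ 0 := by
    intro h
    apply hc
    funext i
    have h2 := pcP_coeff n c i
    rw [h] at h2; simpa using h2.symm
  rw [fInt, intervalIntegral.integral_of_le (by norm_num)]
  rw [MeasureTheory.setIntegral_pos_iff_support_of_nonneg_ae
    (Filter.Eventually.of_forall fun x => abs_nonneg _)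
    ((Polynomial.continuous _).abs.integrableOn_Ioc)]
  have hsub : Ioc (0:ℝ) 1 ⊆
      (Function.support (fun x => |(pcP n c).eval x|) ∩ Ioc 0 1) ∪ {x | (pcP n c).IsRoot x} := by
    intro x hx
    by_cases hr : (pcP n c).eval x = 0
    · exact Or.inr hr
    · exact Or.inl ⟨by simp [Function.mem_support, hr], hx⟩
  have hroots : volume {x | (pcP n c).IsRoot x} = 0 :=
    (Polynomial.finite_setOf_isRoot hp).measure_zero _
  have h1 : volume (Ioc (0:ℝ) 1) ≤
      volume (Function.support (fun x => |(pcP n c).eval x|) ∩ Ioc 0 1) := by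
    calc volume (Ioc (0:ℝ) 1)
        ≤ volume ((Function.support (fun x => |(pcP n c).eval x|) ∩ Ioc 0 1)
            ∪ {x | (pcP n c).IsRoot x}) := measure_mono hsub
      _ ≤ _ + volume {x | (pcP n c).IsRoot x} := measure_union_le _ _
      _ = _ := by rw [hroots, add_zero]
  have h2 : volume (Ioc (0:ℝ) 1) = 1 := by simp
  rw [h2] at h1
  exact lt_of_lt_of_le one_pos h1

lemma lemA (n : ℕ) (hn : 0 < n) :
    ∃ m : ℝ, 0 < m ∧ ∀ c : Fin n → ℝ, m * ‖c‖ ≤ fInt n c := by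
  haveI : Nonempty (Fin n) := ⟨⟨0, hn⟩⟩
  obtain ⟨c₀, hc₀s, hmin⟩ := (isCompact_sphere (0 : Fin n → ℝ) 1).exists_isMinOn
    (NormedSpace.sphere_nonempty.mpr zero_le_one) (fInt_cont n).continuousOn
  have hc₀n : ‖c₀‖ = 1 := by simpa using hc₀s
  have hc₀ : c₀ ≠ 0 := by intro h; rw [h] at hc₀n; simp at hc₀n
  refine ⟨fInt n c₀, fInt_pos n c₀ hc₀, fun c => ?_⟩
  rcases eq_or_ne c 0 with rfl | hc
  · simp [fInt, pcP]
  · have hnc : (0:ℝ) < ‖c‖ := norm_pos_iff.mpr hc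
    set d := ‖c‖⁻¹ • c with hd
    have hds : d ∈ Metric.sphere (0 : Fin n → ℝ) 1 := by
      simp [hd, norm_smul, abs_of_pos (inv_pos.mpr hnc), inv_mul_cancel₀ hnc.ne']
    have h1 : fInt n c₀ ≤ fInt n d := hmin hds
    have h2 : fInt n d = ‖c‖⁻¹ * fInt n c := by
      unfold fInt
      rw [← intervalIntegral.integral_const_mul]
      congr 1; funext x
      rw [pcP_eval, pcP_eval]
      have : ∑ i : Fin n, d i * x ^ (i:ℕ) = ‖c‖⁻¹ * ∑ i : Fin n, c i * x ^ (i:ℕ) := by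
        rw [Finset.mul_sum]
        refine Finset.sum_congr rfl fun i _ => ?_
        simp [hd, mul_assoc]
      rw [this, abs_mul, abs_of_pos (inv_pos.mpr hnc)]
    rw [h2] at h1
    calc fInt n c₀ * ‖c‖ ≤ (‖c‖⁻¹ * fInt n c) * ‖c‖ := by
          exact mul_le_mul_of_nonneg_right h1 hnc.le
      _ = fInt n c := by field_simp

/-- If `g ∈ BMO(ℝ)` (with BMO norm bound `M`) coincides with a polynomial
`P ∈ Π_k` on a compact interval `J = [a,b]`, then
`‖P'‖_{L^∞(J)} ≤ (c(k)/|J|) ‖g‖_BMO`. -/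
theorem stmt15 (k : ℕ) :
    ∃ c : ℝ, 0 < c ∧ ∀ (g : ℝ → ℝ) (P : Polynomial ℝ) (a b M : ℝ),
      a < b → P.degree < (k : ℕ) →
      LocallyIntegrable g volume → 0 ≤ M →
      (∀ u v : ℝ, u < v →
        (∫ x in Icc u v, |g x - (v - u)⁻¹ * ∫ y in Icc u v, g y|) ≤ M * (v - u)) →
      (∀ x ∈ Icc a b, g x = P.eval x) →
      ∀ x ∈ Icc a b, |P.derivative.eval x| ≤ c / (b - a) * M := by
  set n := max k 1 with hndef
  have hn0 : 0 < n := lt_of_lt_of_le one_pos (le_max_right _ _)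
  obtain ⟨m, hm, hmle⟩ := lemA n hn0
  refine ⟨(n : ℝ)^2 / m, by positivity, ?_⟩
  intro g P a b M hab hdeg hloc hM hbmo hg x hx
  have hba : (0:ℝ) < b - a := sub_pos.mpr hab
  set avg := (b - a)⁻¹ * ∫ y in Icc a b, g y with havg
  set Q := P - Polynomial.C avg with hQdef
  have hQdeg : Q.degree < (n : ℕ) := by
    refine lt_of_le_of_lt (Polynomial.degree_sub_le _ _) ?_
    rw [max_lt_iff]
    constructor
    · exact lt_of_lt_of_le hdeg (by exact_mod_cast Nat.cast_le.mpr (le_max_left k 1))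
    · exact lt_of_le_of_lt Polynomial.degree_C_le (by exact_mod_cast Nat.cast_pos.mpr hn0)
  have hQnat : Q.natDegree < n := by
    rcases eq_or_ne Q 0 with h | h
    · simpa [h] using hn0
    · exact (Polynomial.natDegree_lt_iff_degree_lt h).mpr hQdeg
  -- BMO bound on ∫ |Q|
  have hI : (∫ y in Icc a b, |Q.eval y|) ≤ M * (b - a) := by
    refine le_trans (le_of_eq ?_) (hbmo a b hab)
    refine setIntegral_congr_fun measurableSet_Icc fun y hy => ?_
    rw [hg y hy]
    simp [hQdef, havg]
  -- the rescaled polynomial R on [0,1]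
  set L := Polynomial.C a + Polynomial.C (b - a) * Polynomial.X with hLdef
  set R := Q.comp L with hRdef
  have hLeval : ∀ t : ℝ, L.eval t = (b - a) * t + a := by
    intro t; simp [hLdef]; ring
  have hReval : ∀ t : ℝ, R.eval t = Q.eval ((b - a) * t + a) := by
    intro t; rw [hRdef, Polynomial.eval_comp, hLeval]
  have hLnat : L.natDegree = 1 := by
    rw [hLdef]
    compute_degree!
    exact sub_ne_zero.mpr hab.ne'
  have hRnat : R.natDegree < n := by
    rw [hRdef, Polynomial.natDegree_comp, hLnat, mul_one]; exact hQnat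
  set cv : Fin n → ℝ := fun i => R.coeff i with hcvdef
  have hRc : ∀ t : ℝ, R.eval t = ∑ i : Fin n, cv i * t ^ (i : ℕ) := by
    intro t
    rw [Polynomial.eval_eq_sum_range' hRnat, ← Fin.sum_univ_eq_sum_range]
  -- fInt bound
  have hfInt : fInt n cv = (b - a)⁻¹ * ∫ y in Icc a b, |Q.eval y| := by
    unfold fInt
    have e1 : ∀ t : ℝ, |(pcP n cv).eval t| = |Q.eval ((b - a) * t + a)| := by
      intro t; rw [pcP_eval, ← hRc, hReval]
    simp only [e1]
    rw [intervalIntegral.integral_comp_mul_add (fun y => |Q.eval y|) hba.ne' a]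
    rw [mul_zero, zero_add, mul_one]
    have : (b - a) + a = b := by ring
    rw [this, smul_eq_mul]
    congr 1
    rw [intervalIntegral.integral_of_le hab.le, integral_Icc_eq_integral_Ioc]
  have hfIntM : fInt n cv ≤ M := by
    rw [hfInt]
    calc (b - a)⁻¹ * ∫ y in Icc a b, |Q.eval y|
        ≤ (b - a)⁻¹ * (M * (b - a)) := by
          exact mul_le_mul_of_nonneg_left hI (inv_nonneg.mpr hba.le)
      _ = M := by field_simp
  have hcvnorm : ‖cv‖ ≤ M / m := by
    rw [le_div_iff₀ hm]
    calc ‖cv‖ * m = m * ‖cv‖ := mul_comm _ _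
      _ ≤ fInt n cv := hmle cv
      _ ≤ M := hfIntM
  -- derivative bound on [0,1]
  have hRder : ∀ t ∈ Icc (0:ℝ) 1, |R.derivative.eval t| ≤ (n : ℝ)^2 * ‖cv‖ := by
    intro t ht
    have hR'nat : R.derivative.natDegree < n :=
      lt_of_le_of_lt (Polynomial.natDegree_derivative_le R) (by omega)
    rw [Polynomial.eval_eq_sum_range' hR'nat]
    refine (Finset.abs_sum_le_sum_abs _ _).trans ?_
    have hterm : ∀ j ∈ Finset.range n, |R.derivative.coeff j * t ^ j| ≤ (n : ℝ) * ‖cv‖ := by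
      intro j hj
      rw [abs_mul]
      have htj : |t ^ j| ≤ 1 := by
        rw [abs_pow]; exact pow_le_one₀ (abs_nonneg t) (abs_le.mpr ⟨by linarith [ht.1], ht.2⟩)
      have hcoef : |R.derivative.coeff j| ≤ (n : ℝ) * ‖cv‖ := by
        rw [Polynomial.coeff_derivative, abs_mul]
        have h1 : |R.coeff (j + 1)| ≤ ‖cv‖ := by
          by_cases hjn : j + 1 < n
          · have := norm_le_pi_norm cv ⟨j + 1, hjn⟩
            simpa [hcvdef, Real.norm_eq_abs] using this
          · have : R.coeff (j + 1) = 0 :=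
              Polynomial.coeff_eq_zero_of_natDegree_lt (lt_of_lt_of_le hRnat (by omega))
            simp [this]
        have h2 : |((j : ℝ) + 1)| ≤ (n : ℝ) := by
          rw [abs_of_nonneg (by positivity)]
          have : j + 1 ≤ n := Finset.mem_range.mp hj
          exact_mod_cast this
        calc |R.coeff (j + 1)| * |((j:ℝ) + 1)| ≤ ‖cv‖ * (n : ℝ) := by
              exact mul_le_mul h1 h2 (abs_nonneg _) (norm_nonneg _)
          _ = (n : ℝ) * ‖cv‖ := mul_comm _ _
      calc |R.derivative.coeff j| * |t ^ j| ≤ ((n : ℝ) * ‖cv‖) * 1 := by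
            exact mul_le_mul hcoef htj (abs_nonneg _) (by positivity)
        _ = (n : ℝ) * ‖cv‖ := mul_one _
    calc ∑ j ∈ Finset.range n, |R.derivative.coeff j * t ^ j|
        ≤ ∑ _j ∈ Finset.range n, (n : ℝ) * ‖cv‖ := Finset.sum_le_sum hterm
      _ = (n : ℝ) * ((n : ℝ) * ‖cv‖) := by simp [mul_comm]
      _ = (n : ℝ)^2 * ‖cv‖ := by ring
  -- chain rule
  have hchain : ∀ t : ℝ, R.derivative.eval t = (b - a) * Q.derivative.eval ((b - a) * t + a) := by
    intro t
    rw [hRdef, Polynomial.derivative_comp]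
    have hLder : L.derivative = Polynomial.C (b - a) := by
      rw [hLdef]; simp
    rw [hLder, Polynomial.eval_mul, Polynomial.eval_C, Polynomial.eval_comp, hLeval]
  -- conclude
  set t := (x - a) / (b - a) with htdef
  have hxt : (b - a) * t + a = x := by rw [htdef]; field_simp; ring
  have ht01 : t ∈ Icc (0:ℝ) 1 := by
    constructor
    · exact div_nonneg (by linarith [hx.1]) hba.le
    · rw [div_le_one hba]; linarith [hx.2]
  have hPQ : P.derivative = Q.derivative := by
    rw [hQdef]; simp
  have key : |Q.derivative.eval x| ≤ (n : ℝ)^2 * ‖cv‖ / (b - a) := by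
    rw [le_div_iff₀ hba]
    have := hRder t ht01
    rw [hchain t, hxt, abs_mul, abs_of_pos hba] at this
    calc |Q.derivative.eval x| * (b - a) = (b - a) * |Q.derivative.eval x| := mul_comm _ _
      _ ≤ (n : ℝ)^2 * ‖cv‖ := this
  rw [hPQ]
  refine key.trans ?_
  have h6 : (n : ℝ)^2 * ‖cv‖ ≤ (n : ℝ)^2 * (M / m) := by gcongr
  calc (n : ℝ)^2 * ‖cv‖ / (b - a) ≤ ((n : ℝ)^2 * (M / m)) / (b - a) := by gcongr
    _ = (n : ℝ)^2 / m / (b - a) * M := by ring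
end
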